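/- If P₁ is a Markov kernel from E₀ to E₁ with Dobrushin coefficient β(P₁) ≤ 1−ε₁ and P₂ is a Markov kernel from E₁ to E₂ with β(P₂) ≤ 1−ε₂, then the composition P₁P₂ satisfies β(P₁P₂) ≤ β(P₁)·β(P₂) ≤ (1−ε₁)(1−ε₂). In particular, composing n kernels each with Dobrushin coefficient at most 1−ε gives a coefficient at most (1−ε)ⁿ. -/

import Mathlib

open MeasureTheory ProbabilityTheory

/-- Total variation distance as the supremum over measurable sets. -/
noncomputable def tvDist {E : Type*} [MeasurableSpace E] (μ ρ : Measure E) : ℝ :=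
  ⨆ A : {s : Set E // MeasurableSet s}, |(μ A).toReal - (ρ A).toReal|

/-- Dobrushin contraction coefficient of a kernel. -/
noncomputable def dobrushin {E F : Type*} [MeasurableSpace E] [MeasurableSpace F]
    (P : Kernel E F) : ℝ :=
  ⨆ p : E × E, tvDist (P p.1) (P p.2)

/-- `n`-fold composition of a kernel with itself. -/
noncomputable def iterKernel {E : Type*} [MeasurableSpace E] (P : Kernel E E) :
    ℕ → Kernel E E
  | 0 => Kernel.id
  | n + 1 => (iterKernel P n).comp P

section Aux

variable {E F : Type*} [MeasurableSpace E] [MeasurableSpace F]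

lemma tv_nonneg (μ ρ : Measure E) : 0 ≤ tvDist μ ρ :=
  Real.iSup_nonneg fun _ => abs_nonneg _

lemma dob_nonneg (P : Kernel E F) : 0 ≤ dobrushin P :=
  Real.iSup_nonneg fun _ => tv_nonneg _ _

lemma toReal_prob_le_one (μ : Measure E) [IsProbabilityMeasure μ] (A : Set E) :
    (μ A).toReal ≤ 1 := by
  simpa using ENNReal.toReal_mono ENNReal.one_ne_top (prob_le_one (μ := μ) (s := A))

lemma abs_prob_sub_le_one (μ ρ : Measure E) [IsProbabilityMeasure μ] [IsProbabilityMeasure ρ]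
    (A : Set E) : |(μ A).toReal - (ρ A).toReal| ≤ 1 := by
  have h1 := toReal_prob_le_one μ A
  have h2 := toReal_prob_le_one ρ A
  have h3 : 0 ≤ (μ A).toReal := ENNReal.toReal_nonneg
  have h4 : 0 ≤ (ρ A).toReal := ENNReal.toReal_nonneg
  rw [abs_le]
  constructor <;> linarith

lemma tv_le_one (μ ρ : Measure E) [IsProbabilityMeasure μ] [IsProbabilityMeasure ρ] :
    tvDist μ ρ ≤ 1 :=
  Real.iSup_le (fun A => abs_prob_sub_le_one μ ρ A) zero_le_one

lemma abs_le_tv {μ ρ : Measure E} [IsProbabilityMeasure μ] [IsProbabilityMeasure ρ]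
    {A : Set E} (hA : MeasurableSet A) :
    |(μ A).toReal - (ρ A).toReal| ≤ tvDist μ ρ := by
  refine le_ciSup (f := fun B : {s : Set E // MeasurableSet s} =>
    |(μ B).toReal - (ρ B).toReal|) ⟨1, ?_⟩ ⟨A, hA⟩
  rintro r ⟨B, rfl⟩
  exact abs_prob_sub_le_one μ ρ B

lemma tv_le_dob (P : Kernel E F) [IsMarkovKernel P] (x y : E) :
    tvDist (P x) (P y) ≤ dobrushin P := by
  refine le_ciSup (f := fun p : E × E => tvDist (P p.1) (P p.2)) ⟨1, ?_⟩ (x, y)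
  rintro r ⟨p, rfl⟩
  exact tv_le_one _ _

lemma dob_le_one (P : Kernel E F) [IsMarkovKernel P] : dobrushin P ≤ 1 :=
  Real.iSup_le (fun _ => tv_le_one _ _) zero_le_one

lemma tv_comm (μ ρ : Measure E) : tvDist μ ρ = tvDist ρ μ := by
  unfold tvDist
  congr 1
  ext A
  rw [abs_sub_comm]

lemma integrable_kernel_fun (P : Kernel E F) [IsMarkovKernel P] {A : Set F}
    (hA : MeasurableSet A) (μ : Measure E) [IsFiniteMeasure μ] :
    Integrable (fun z => (P z A).toReal) μ := by
  refine Integrable.mono' (integrable_const 1)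
    ((P.measurable_coe hA).ennreal_toReal.aestronglyMeasurable) ?_
  refine Filter.Eventually.of_forall fun z => ?_
  rw [Real.norm_eq_abs, abs_of_nonneg ENNReal.toReal_nonneg]
  exact toReal_prob_le_one (P z) A

/-- Key one-sided contraction estimate. -/
lemma key_estimate (μ ν : Measure E) [IsProbabilityMeasure μ] [IsProbabilityMeasure ν]
    (P : Kernel E F) [IsMarkovKernel P] {A : Set F} (hA : MeasurableSet A) :
    (∫ z, (P z A).toReal ∂μ) - (∫ z, (P z A).toReal ∂ν) ≤ dobrushin P * tvDist μ ν := by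
  obtain ⟨S, hS, hSle, hScle⟩ := hahn_decomposition (μ := μ) (ν := ν)
  set f : E → ℝ := fun z => (P z A).toReal with hf
  have hle1 : ν.restrict S ≤ μ.restrict S := by
    refine Measure.le_iff.mpr fun t ht => ?_
    rw [Measure.restrict_apply ht, Measure.restrict_apply ht]
    exact hSle _ (ht.inter hS) Set.inter_subset_right
  have hle2 : μ.restrict Sᶜ ≤ ν.restrict Sᶜ := by
    refine Measure.le_iff.mpr fun t ht => ?_
    rw [Measure.restrict_apply ht, Measure.restrict_apply ht]
    exact hScle _ (ht.inter hS.compl) Set.inter_subset_right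
  set ξ : Measure E := μ.restrict S - ν.restrict S with hξ
  set η : Measure E := ν.restrict Sᶜ - μ.restrict Sᶜ with hη
  haveI : IsFiniteMeasure ξ := by rw [hξ]; infer_instance
  haveI : IsFiniteMeasure η := by rw [hη]; infer_instance
  have hξadd : ξ + ν.restrict S = μ.restrict S := Measure.sub_add_cancel_of_le hle1
  have hηadd : η + μ.restrict Sᶜ = ν.restrict Sᶜ := Measure.sub_add_cancel_of_le hle2
  have hint : ∀ (ρ : Measure E) [IsFiniteMeasure ρ], Integrable f ρ := fun ρ _ =>
    integrable_kernel_fun P hA ρ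
  have hsplitμ : ∫ z, f z ∂μ
      = (∫ z, f z ∂ξ + ∫ z, f z ∂(ν.restrict S)) + ∫ z, f z ∂(μ.restrict Sᶜ) := by
    conv_lhs => rw [← Measure.restrict_add_restrict_compl (μ := μ) hS]
    rw [integral_add_measure (hint _) (hint _), ← hξadd,
      integral_add_measure (hint _) (hint _)]
  have hsplitν : ∫ z, f z ∂ν
      = ∫ z, f z ∂(ν.restrict S) + (∫ z, f z ∂η + ∫ z, f z ∂(μ.restrict Sᶜ)) := by
    conv_lhs => rw [← Measure.restrict_add_restrict_compl (μ := ν) hS]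
    rw [integral_add_measure (hint _) (hint _), ← hηadd,
      integral_add_measure (hint _) (hint _)]
  have hμS : ν S ≤ μ S := hSle S hS subset_rfl
  have hνSc : μ Sᶜ ≤ ν Sᶜ := hScle Sᶜ hS.compl subset_rfl
  set δ : ℝ := (μ S).toReal - (ν S).toReal with hδ
  have hξuniv : (ξ Set.univ).toReal = δ := by
    rw [hξ, Measure.sub_apply MeasurableSet.univ hle1]
    simp only [Measure.restrict_apply_univ]
    rw [ENNReal.toReal_sub_of_le hμS (measure_ne_top μ S)]
  have hsum : ∀ (ρ : Measure E) [IsProbabilityMeasure ρ],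
      (ρ S).toReal + (ρ Sᶜ).toReal = 1 := by
    intro ρ _
    rw [← ENNReal.toReal_add (measure_ne_top ρ S) (measure_ne_top ρ Sᶜ),
      measure_add_measure_compl hS, measure_univ, ENNReal.toReal_one]
  have hημν : (ν Sᶜ).toReal - (μ Sᶜ).toReal = δ := by
    have h1 := hsum μ
    have h2 := hsum ν
    rw [hδ]; linarith
  have hηuniv : (η Set.univ).toReal = δ := by
    rw [hη, Measure.sub_apply MeasurableSet.univ hle2]
    simp only [Measure.restrict_apply_univ]
    rw [ENNReal.toReal_sub_of_le hνSc (measure_ne_top ν Sᶜ)]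
    exact hημν
  have hδnn : 0 ≤ δ := by
    rw [hδ]
    have := ENNReal.toReal_mono (measure_ne_top μ S) hμS
    linarith
  have hδtv : δ ≤ tvDist μ ν := le_trans (le_abs_self _) (abs_le_tv hS)
  have hmain : ∫ z, f z ∂ξ - ∫ z, f z ∂η ≤ dobrushin P * δ := by
    by_cases hδ0 : δ = 0
    · have hξ0 : ξ = 0 := by
        refine Measure.measure_univ_eq_zero.mp ?_
        have : (ξ Set.univ).toReal = 0 := by rw [hξuniv, hδ0]
        exact (ENNReal.toReal_eq_zero_iff _).mp this |>.resolve_right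
          (measure_ne_top ξ Set.univ)
      have hη0 : η = 0 := by
        refine Measure.measure_univ_eq_zero.mp ?_
        have : (η Set.univ).toReal = 0 := by rw [hηuniv, hδ0]
        exact (ENNReal.toReal_eq_zero_iff _).mp this |>.resolve_right
          (measure_ne_top η Set.univ)
      rw [hξ0, hη0, hδ0]
      simp
    · haveI : Nonempty E := by
        by_contra h
        rw [not_nonempty_iff] at h
        have h1 : μ Set.univ = 1 := measure_univ
        rw [Set.univ_eq_empty_iff.mpr h, measure_empty] at h1
        exact zero_ne_one h1
      set c : ℝ := ⨅ z, f z with hc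
      have hbdd : BddBelow (Set.range f) := ⟨0, by
        rintro _ ⟨z, rfl⟩; exact ENNReal.toReal_nonneg⟩
      have hc_le : ∀ z, c ≤ f z := fun z => ciInf_le hbdd z
      have hfw : ∀ z w, f z - f w ≤ dobrushin P := by
        intro z w
        have h1 : f z - f w ≤ |f z - f w| := le_abs_self _
        have h2 : |f z - f w| ≤ tvDist (P z) (P w) := abs_le_tv hA
        have h3 : tvDist (P z) (P w) ≤ dobrushin P := tv_le_dob P z w
        linarith
      have hf_le : ∀ z, f z ≤ c + dobrushin P := by
        intro z
        have h1 : f z - dobrushin P ≤ c := le_ciInf fun w => by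
          have := hfw z w; linarith
        linarith
      have h1 : ∫ z, f z ∂ξ ≤ (c + dobrushin P) * δ := by
        calc ∫ z, f z ∂ξ ≤ ∫ _, (c + dobrushin P) ∂ξ :=
              integral_mono (hint _) (integrable_const _) hf_le
          _ = (c + dobrushin P) * δ := by
              rw [integral_const, smul_eq_mul, measureReal_def, hξuniv, mul_comm]
      have h2 : c * δ ≤ ∫ z, f z ∂η := by
        calc c * δ = ∫ _, c ∂η := by
              rw [integral_const, smul_eq_mul, measureReal_def, hηuniv, mul_comm]
          _ ≤ ∫ z, f z ∂η := integral_mono (integrable_const _) (hint _) hc_le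
      have hring : (c + dobrushin P) * δ = c * δ + dobrushin P * δ := by ring
      linarith
  have hmul : dobrushin P * δ ≤ dobrushin P * tvDist μ ν :=
    mul_le_mul_of_nonneg_left hδtv (dob_nonneg P)
  have hdiff : ∫ z, f z ∂μ - ∫ z, f z ∂ν = ∫ z, f z ∂ξ - ∫ z, f z ∂η := by
    rw [hsplitμ, hsplitν]; ring
  calc (∫ z, f z ∂μ) - ∫ z, f z ∂ν = ∫ z, f z ∂ξ - ∫ z, f z ∂η := hdiff
    _ ≤ dobrushin P * δ := hmain
    _ ≤ dobrushin P * tvDist μ ν := hmul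

lemma dob_comp_le {E₀ E₁ E₂ : Type*} [MeasurableSpace E₀] [MeasurableSpace E₁]
    [MeasurableSpace E₂] (P₁ : Kernel E₀ E₁) [IsMarkovKernel P₁]
    (P₂ : Kernel E₁ E₂) [IsMarkovKernel P₂] :
    dobrushin (P₂.comp P₁) ≤ dobrushin P₁ * dobrushin P₂ := by
  have hnn : 0 ≤ dobrushin P₁ * dobrushin P₂ := mul_nonneg (dob_nonneg _) (dob_nonneg _)
  refine Real.iSup_le (fun p => ?_) hnn
  obtain ⟨x, y⟩ := p
  refine Real.iSup_le (fun B => ?_) hnn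
  obtain ⟨A, hA⟩ := B
  have hcomp : ∀ w : E₀, ((P₂.comp P₁) w A).toReal = ∫ z, (P₂ z A).toReal ∂(P₁ w) := by
    intro w
    rw [Kernel.comp_apply' _ _ _ hA, ← integral_toReal
      ((P₂.measurable_coe hA).aemeasurable)
      (Filter.Eventually.of_forall fun z => measure_lt_top _ _)]
  show |((P₂.comp P₁) x A).toReal - ((P₂.comp P₁) y A).toReal| ≤ _
  rw [hcomp x, hcomp y]
  have k1 := key_estimate (P₁ x) (P₁ y) P₂ hA
  have k2 := key_estimate (P₁ y) (P₁ x) P₂ hA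
  rw [tv_comm (P₁ y) (P₁ x)] at k2
  have htv : tvDist (P₁ x) (P₁ y) ≤ dobrushin P₁ := tv_le_dob P₁ x y
  have hb2 : 0 ≤ dobrushin P₂ := dob_nonneg _
  have hmul : dobrushin P₂ * tvDist (P₁ x) (P₁ y) ≤ dobrushin P₂ * dobrushin P₁ :=
    mul_le_mul_of_nonneg_left htv hb2
  have hcm : dobrushin P₂ * dobrushin P₁ = dobrushin P₁ * dobrushin P₂ := mul_comm _ _
  rw [abs_sub_le_iff]
  constructor <;> linarith

lemma iter_markov {E : Type*} [MeasurableSpace E] (Q : Kernel E E) [IsMarkovKernel Q] :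
    ∀ n, IsMarkovKernel (iterKernel Q n)
  | 0 => by rw [iterKernel]; infer_instance
  | n + 1 => by
      haveI := iter_markov Q n
      rw [iterKernel]
      infer_instance

end Aux

/-- The Dobrushin coefficient is submultiplicative under composition of Markov kernels:
`β(P₁P₂) ≤ β(P₁)·β(P₂) ≤ (1−ε₁)(1−ε₂)`; in particular the `n`-fold composition of a kernel
with coefficient at most `1−ε` has coefficient at most `(1−ε)ⁿ`. -/
theorem dobrushin_comp_le
    {E₀ E₁ E₂ E : Type*} [MeasurableSpace E₀] [MeasurableSpace E₁] [MeasurableSpace E₂]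
    [MeasurableSpace E]
    (P₁ : Kernel E₀ E₁) [IsMarkovKernel P₁] (P₂ : Kernel E₁ E₂) [IsMarkovKernel P₂]
    (ε₁ ε₂ : ℝ) (h₁ : dobrushin P₁ ≤ 1 - ε₁) (h₂ : dobrushin P₂ ≤ 1 - ε₂)
    (hε₁ : ε₁ ∈ Set.Ioo (0 : ℝ) 1) (hε₂ : ε₂ ∈ Set.Ioo (0 : ℝ) 1)
    (Q : Kernel E E) [IsMarkovKernel Q]
    (ε : ℝ) (hε : ε ∈ Set.Ioo (0 : ℝ) 1) (hQ : dobrushin Q ≤ 1 - ε) :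
    dobrushin (P₂.comp P₁) ≤ dobrushin P₁ * dobrushin P₂ ∧
      dobrushin P₁ * dobrushin P₂ ≤ (1 - ε₁) * (1 - ε₂) ∧
      ∀ n : ℕ, dobrushin (iterKernel Q n) ≤ (1 - ε) ^ n := by
  refine ⟨dob_comp_le P₁ P₂, ?_, ?_⟩
  · exact mul_le_mul h₁ h₂ (dob_nonneg _) (by linarith [hε₁.2])
  · intro n
    induction n with
    | zero => simpa [iterKernel] using dob_le_one (Kernel.id : Kernel E E)
    | succ n ih =>
        haveI := iter_markov Q n
        calc dobrushin (iterKernel Q (n + 1)) = dobrushin ((iterKernel Q n).comp Q) := by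
              rw [iterKernel]
          _ ≤ dobrushin Q * dobrushin (iterKernel Q n) := dob_comp_le Q (iterKernel Q n)
          _ ≤ (1 - ε) * (1 - ε) ^ n :=
              mul_le_mul hQ ih (dob_nonneg _) (by linarith [hε.2])
          _ = (1 - ε) ^ (n + 1) := by ring
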